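/- Let Σ be a symmetric positive semi-definite d×d real matrix and T a symmetric positive definite d×d real matrix. Then Tr[((TΣT)^{1/2} Σ (TΣT)^{1/2})^{1/2}] = Tr[T Σ]. -/

import Mathlib

open MeasureTheory ProbabilityTheory Matrix
open scoped ENNReal NNReal

noncomputable section

abbrev Ed (d : ℕ) := EuclideanSpace ℝ (Fin d)

/-- A coupling of `μ` and `ν`: a measure on the product whose marginals are `μ` and `ν`. -/
def IsCoupling {d : ℕ} (γ : Measure (Ed d × Ed d)) (μ ν : Measure (Ed d)) : Prop :=
  γ.map Prod.fst = μ ∧ γ.map Prod.snd = ν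

/-- Quadratic transport cost of a coupling. -/
def cost2 {d : ℕ} (γ : Measure (Ed d × Ed d)) : ℝ≥0∞ :=
  ∫⁻ p, ENNReal.ofReal (‖p.1 - p.2‖ ^ 2) ∂γ

/-- Squared 2-Wasserstein distance. -/
def W2sq {d : ℕ} (μ ν : Measure (Ed d)) : ℝ≥0∞ :=
  ⨅ (γ : Measure (Ed d × Ed d)) (_ : IsCoupling γ μ ν), cost2 γ

/-- 2-Wasserstein distance. -/
def W2 {d : ℕ} (μ ν : Measure (Ed d)) : ℝ :=
  Real.sqrt (W2sq μ ν).toReal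

/-- Finite second moment. -/
def FiniteSecondMoment {d : ℕ} (μ : Measure (Ed d)) : Prop :=
  ∫⁻ x, ENNReal.ofReal (‖x‖ ^ 2) ∂μ < ⊤

/-- Mean vector of a measure. -/
def meanVec {d : ℕ} (μ : Measure (Ed d)) : Ed d := ∫ x, x ∂μ

/-- Covariance matrix of a measure. -/
def covMatrix {d : ℕ} (μ : Measure (Ed d)) : Matrix (Fin d) (Fin d) ℝ :=
  Matrix.of fun i j => ∫ x, (x i - meanVec μ i) * (x j - meanVec μ j) ∂μ

/-- Positive semidefinite square root of a matrix (junk value `0` if not psd). -/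
def msqrt {d : ℕ} (S : Matrix (Fin d) (Fin d) ℝ) : Matrix (Fin d) (Fin d) ℝ :=
  @dite _ S.PosSemidef (Classical.dec _) (fun h => (h.1.eigenvectorUnitary : Matrix (Fin d) (Fin d) ℝ) *
    diagonal ((↑) ∘ Real.sqrt ∘ h.1.eigenvalues) * (star h.1.eigenvectorUnitary : Matrix (Fin d) (Fin d) ℝ)) (fun _ => 0)

/-- Standard Gaussian measure on `ℝ^d`. -/
def stdGaussian (d : ℕ) : Measure (Ed d) :=
  (Measure.pi fun _ : Fin d => gaussianReal 0 1).map (EuclideanSpace.equiv (Fin d) ℝ).symm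

/-- Gaussian measure on `ℝ^d` with mean `m` and covariance `S`. -/
def gaussianE {d : ℕ} (m : Ed d) (S : Matrix (Fin d) (Fin d) ℝ) : Measure (Ed d) :=
  (stdGaussian d).map fun x => m + (msqrt S).toEuclideanLin x

/-- Normal approximation: Gaussian with the same mean and covariance as `μ`. -/
def normalApprox {d : ℕ} (μ : Measure (Ed d)) : Measure (Ed d) :=
  gaussianE (meanVec μ) (covMatrix μ)

open scoped MatrixOrder in
lemma msqrt_eq_sqrt {d : ℕ} {S : Matrix (Fin d) (Fin d) ℝ} (h : S.PosSemidef) :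
    msqrt S = CFC.sqrt S := by
  unfold msqrt
  rw [dif_pos h, CFC.sqrt_eq_cfc, cfc_nnreal_eq_real _ S h.nonneg, h.1.cfc_eq]
  simp [IsHermitian.cfc, Function.comp_def, Unitary.conjStarAlgAut_apply,
    fun i => max_eq_left (h.eigenvalues_nonneg i)]

open scoped MatrixOrder in
lemma msqrt_psd {d : ℕ} {S : Matrix (Fin d) (Fin d) ℝ} (h : S.PosSemidef) :
    (msqrt S).PosSemidef := by
  rw [msqrt_eq_sqrt h]; exact (CFC.sqrt_nonneg S).posSemidef

open scoped MatrixOrder in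
lemma msqrt_mul_self {d : ℕ} {S : Matrix (Fin d) (Fin d) ℝ} (h : S.PosSemidef) :
    msqrt S * msqrt S = S := by
  rw [msqrt_eq_sqrt h]; exact CFC.sqrt_mul_sqrt_self S h.nonneg

open scoped MatrixOrder in
lemma msqrt_eq_of_sq_eq {d : ℕ} {S X : Matrix (Fin d) (Fin d) ℝ} (hX : X.PosSemidef)
    (h : S.PosSemidef) (hXX : X ^ 2 = S) : msqrt S = X := by
  rw [msqrt_eq_sqrt h, ← hXX]; exact CFC.sqrt_sq X hX.nonneg

/-- Matrix identity: `Tr[((TΣT)^{1/2} Σ (TΣT)^{1/2})^{1/2}] = Tr[T Σ]` for positive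
semi-definite `Σ` and positive definite `T`. -/
theorem trace_sqrt_conj_identity {d : ℕ}
    (S T : Matrix (Fin d) (Fin d) ℝ) (hS : S.PosSemidef) (hT : T.PosDef) :
    (msqrt (msqrt (T * S * T) * S * msqrt (T * S * T))).trace = (T * S).trace := by
  classical
  letI := hT.isUnit.invertible
  have hTH : Tᴴ = T := hT.isHermitian.eq
  have hTST : (T * S * T).PosSemidef := by
    have := hS.mul_mul_conjTranspose_same T
    rwa [hTH] at this
  have hA := msqrt_eq_sqrt hTST
  set A := msqrt (T * S * T) with hAdef
  have hApsd : A.PosSemidef := msqrt_psd hTST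
  have hAA : A * A = T * S * T := msqrt_mul_self hTST
  have hAH : Aᴴ = A := hApsd.isHermitian.eq
  have hASA : (A * S * A).PosSemidef := by
    have := hS.mul_mul_conjTranspose_same A
    rwa [hAH] at this
  have hXpsd : (A * T⁻¹ * A).PosSemidef := by
    have := hT.inv.posSemidef.mul_mul_conjTranspose_same A
    rwa [hAH] at this
  have hXX : (A * T⁻¹ * A) ^ 2 = A * S * A := by
    rw [pow_two]
    calc A * T⁻¹ * A * (A * T⁻¹ * A)
        = A * T⁻¹ * (A * A) * (T⁻¹ * A) := by simp only [mul_assoc]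
      _ = A * T⁻¹ * (T * S * T) * (T⁻¹ * A) := by rw [hAA]
      _ = A * S * A := by
          simp only [mul_assoc, Matrix.inv_mul_cancel_left_of_invertible,
            Matrix.mul_inv_cancel_left_of_invertible]
  have h2 := msqrt_eq_sqrt hASA
  have hsqrt : msqrt (A * S * A) = A * T⁻¹ * A := by
    rw [h2]
    rw [← h2]; exact msqrt_eq_of_sq_eq hXpsd hASA hXX
  rw [hsqrt, Matrix.trace_mul_cycle, hAA, Matrix.mul_inv_cancel_right_of_invertible]

end
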